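/- Let X ∈ ℝ^{n×d}, let ι be a finite index set, and for each i ∈ ι let D_i ∈ ℝ^{n×n} be a diagonal matrix with diagonal entries in {0, 1}. For a diagonal 0/1 matrix D define the cone K_D := {w ∈ ℝ^d : for all k, (Xw)_k ≥ 0 if D_{kk} = 1 and (Xw)_k < 0 if D_{kk} = 0}. Let m ≥ 1, let (w_j, α_j) ∈ ℝ^d × ℝ for j = 1, …, m, and suppose there is a map σ : {1, …, m} → ι such that w_j ∈ K_{D_{σ(j)}} for every j. For each i ∈ ι define v_i := Σ_{j : σ(j) = i, α_j ≥ 0} α_j w_j and u_i := −Σ_{j : σ(j) = i, α_j < 0} α_j w_j. Then: (a) Σ_{j=1}^m α_j ReLU(X w_j) = Σ_{i ∈ ι} D_i X (v_i − u_i), where ReLU acts componentwise: (ReLU(z))_k = max(z_k, 0); and (b) for every i ∈ ι, (2D_i − I) X v_i ≥ 0 and (2D_i − I) X u_i ≥ 0 componentwise. -/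
import Mathlib


open Matrix

open scoped Classical in
/-- Grouping the neurons of a two-layer ReLU network according to
the activation-pattern cones `K_{D_i}` and aggregating the nonnegatively and
negatively weighted neurons within each cone into `v_i` and `u_i` leaves the
network output unchanged, `∑ⱼ αⱼ ReLU(X wⱼ) = ∑ᵢ Dᵢ X (vᵢ − uᵢ)`, and the
aggregated vectors satisfy the cone constraints `(2Dᵢ − I) X vᵢ ≥ 0` and
`(2Dᵢ − I) X uᵢ ≥ 0`. -/
theorem stmt_6 (n d : ℕ) (X : Matrix (Fin n) (Fin d) ℝ)
    (ι : Type) [Fintype ι]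
    (D : ι → Matrix (Fin n) (Fin n) ℝ)
    (hDdiag : ∀ i, ∀ k k' : Fin n, k ≠ k' → D i k k' = 0)
    (hD01 : ∀ i, ∀ k : Fin n, D i k k = 0 ∨ D i k k = 1)
    (m : ℕ) (hm : 1 ≤ m)
    (w : Fin m → Fin d → ℝ) (α : Fin m → ℝ) (σ : Fin m → ι)
    (hcone : ∀ j, ∀ k : Fin n,
      (D (σ j) k k = 1 → 0 ≤ (X *ᵥ w j) k) ∧ (D (σ j) k k = 0 → (X *ᵥ w j) k < 0))
    (v u : ι → Fin d → ℝ)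
    (hv : ∀ i, v i = ∑ j ∈ Finset.univ.filter (fun j => σ j = i ∧ 0 ≤ α j), α j • w j)
    (hu : ∀ i, u i = -∑ j ∈ Finset.univ.filter (fun j => σ j = i ∧ α j < 0), α j • w j) :
    ((∑ j, α j • (fun k => max ((X *ᵥ w j) k) 0)) = ∑ i, (D i) *ᵥ (X *ᵥ (v i - u i)))
    ∧ (∀ i, ∀ k : Fin n,
        0 ≤ ((((2 : ℝ) • D i) - 1) *ᵥ (X *ᵥ v i)) k ∧
        0 ≤ ((((2 : ℝ) • D i) - 1) *ᵥ (X *ᵥ u i)) k) := by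
  -- diagonal action
  have hdiag : ∀ i (z : Fin n → ℝ) (k : Fin n), (D i *ᵥ z) k = D i k k * z k := by
    intro i z k
    simp only [mulVec, dotProduct]
    rw [Finset.sum_eq_single k]
    · intro b _ hb; rw [hDdiag i k b (Ne.symm hb), zero_mul]
    · intro h; exact absurd (Finset.mem_univ k) h
  -- X *ᵥ (v i) and X *ᵥ (u i) as sums
  have hXv : ∀ i (k : Fin n), (X *ᵥ v i) k
      = ∑ j ∈ Finset.univ.filter (fun j => σ j = i ∧ 0 ≤ α j), α j * (X *ᵥ w j) k := by
    intro i k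
    rw [hv i]
    rw [show X *ᵥ (∑ j ∈ Finset.univ.filter (fun j => σ j = i ∧ 0 ≤ α j), α j • w j)
        = ∑ j ∈ Finset.univ.filter (fun j => σ j = i ∧ 0 ≤ α j), α j • (X *ᵥ w j) by
      rw [← X.mulVecLin_apply, map_sum]
      exact Finset.sum_congr rfl fun j _ => by rw [_root_.map_smul, X.mulVecLin_apply]]
    simp [Finset.sum_apply]
  have hXu : ∀ i (k : Fin n), (X *ᵥ u i) k
      = -∑ j ∈ Finset.univ.filter (fun j => σ j = i ∧ α j < 0), α j * (X *ᵥ w j) k := by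
    intro i k
    rw [hu i]
    rw [show X *ᵥ (-∑ j ∈ Finset.univ.filter (fun j => σ j = i ∧ α j < 0), α j • w j)
        = -∑ j ∈ Finset.univ.filter (fun j => σ j = i ∧ α j < 0), α j • (X *ᵥ w j) by
      rw [← X.mulVecLin_apply, map_neg, map_sum]
      congr 1
      exact Finset.sum_congr rfl fun j _ => by rw [_root_.map_smul, X.mulVecLin_apply]]
    simp [Finset.sum_apply]
  constructor
  · funext k
    have hterm : ∀ j : Fin m, α j * max ((X *ᵥ w j) k) 0
        = α j * (D (σ j) k k * (X *ᵥ w j) k) := by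
      intro j
      rcases hD01 (σ j) k with h0 | h1
      · rw [h0, zero_mul, max_eq_right ((hcone j k).2 h0).le, mul_zero]
      · rw [h1, one_mul, max_eq_left ((hcone j k).1 h1)]
    calc (∑ j, α j • (fun k => max ((X *ᵥ w j) k) 0)) k
        = ∑ j, α j * (D (σ j) k k * (X *ᵥ w j) k) := by
          simp only [Finset.sum_apply, Pi.smul_apply, smul_eq_mul]
          exact Finset.sum_congr rfl fun j _ => hterm j
      _ = ∑ i, ∑ j ∈ Finset.univ.filter (fun j => σ j = i),
            α j * (D (σ j) k k * (X *ᵥ w j) k) := by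
          exact (Finset.sum_fiberwise _ _ _).symm
      _ = (∑ i, (D i) *ᵥ (X *ᵥ (v i - u i))) k := by
          rw [Finset.sum_apply]
          refine Finset.sum_congr rfl fun i _ => ?_
          rw [hdiag]
          have hsplit : (X *ᵥ (v i - u i)) k
              = ∑ j ∈ Finset.univ.filter (fun j => σ j = i), α j * (X *ᵥ w j) k := by
            have : X *ᵥ (v i - u i) = X *ᵥ v i - X *ᵥ u i := by
              rw [Matrix.mulVec_sub]
            rw [this]
            have := Finset.sum_filter_add_sum_filter_not
              (Finset.univ.filter (fun j => σ j = i)) (fun j => 0 ≤ α j)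
              (fun j => α j * (X *ᵥ w j) k)
            simp only [Pi.sub_apply, hXv, hXu, sub_neg_eq_add]
            rw [← this]
            congr 1
            · congr 1; rw [Finset.filter_filter]
            · rw [Finset.filter_filter]
              exact Finset.sum_congr (by ext j; simp [not_le]) fun _ _ => rfl
          rw [hsplit, Finset.mul_sum]
          refine Finset.sum_congr rfl fun j hj => ?_
          simp only [Finset.mem_filter] at hj
          rw [hj.2]; ring
  · intro i k
    have haff : ∀ z : Fin n → ℝ, ((((2 : ℝ) • D i) - 1) *ᵥ z) k
        = 2 * (D i k k * z k) - z k := by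
      intro z
      rw [Matrix.sub_mulVec, Matrix.smul_mulVec, Matrix.one_mulVec]
      simp [hdiag i z k]
    constructor
    · rw [haff, hXv]
      rcases hD01 i k with h0 | h1
      · rw [h0]
        simp only [zero_mul, mul_zero, zero_sub, ← Finset.sum_neg_distrib]
        refine Finset.sum_nonneg fun j hj => ?_
        simp only [Finset.mem_filter] at hj
        have := (hcone j k).2 (by rw [hj.2.1]; exact h0)
        nlinarith [hj.2.2]
      · rw [h1]
        have hsum : (0:ℝ) ≤ ∑ j ∈ Finset.univ.filter (fun j => σ j = i ∧ 0 ≤ α j),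
            α j * (X *ᵥ w j) k := by
          refine Finset.sum_nonneg fun j hj => ?_
          simp only [Finset.mem_filter] at hj
          have := (hcone j k).1 (by rw [hj.2.1]; exact h1)
          exact mul_nonneg hj.2.2 this
        nlinarith
    · rw [haff, hXu]
      rcases hD01 i k with h0 | h1
      · rw [h0]
        simp only [zero_mul, mul_zero, zero_sub, neg_neg]
        refine Finset.sum_nonneg fun j hj => ?_
        simp only [Finset.mem_filter] at hj
        have := (hcone j k).2 (by rw [hj.2.1]; exact h0)
        nlinarith [hj.2.2]
      · rw [h1]
        have hsum : (0:ℝ) ≤ -∑ j ∈ Finset.univ.filter (fun j => σ j = i ∧ α j < 0),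
            α j * (X *ᵥ w j) k := by
          rw [← Finset.sum_neg_distrib]
          refine Finset.sum_nonneg fun j hj => ?_
          simp only [Finset.mem_filter] at hj
          have := (hcone j k).1 (by rw [hj.2.1]; exact h1)
          nlinarith [hj.2.2]
        nlinarith
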